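/- Assume E₁ and E₂ are finite-dimensional, and that: (i) f̃(p*,·,·) and g̃(p*,·,·) are hemicontinuous; (ii) f̃(p,·,·) and g̃(p,·,·) are monotone for every p ∈ M; (iii) for every p ∈ M and every x ∈ E₁, y ∈ E₂, the functions f̃(p,x,·) and g̃(p,y,·) are convex; (iv) f̃(p*,x,x) ≥ 0 for every x ∈ C and g̃(p*,y,y) ≥ 0 for every y ∈ Q; (v) for every x ∈ E₁ and y ∈ E₂, the maps (p,x') ↦ f̃(p,x,x') and (p,y') ↦ g̃(p,y,y') are continuous. If SEP(f,g,C,Q) has a unique solution, then for every sequence {pₙ} ⊆ M with pₙ → p*, every generalized approximating sequence corresponding to {pₙ} is bounded in E₁ × E₂. -/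

import Mathlib

open Filter Metric Topology Set

/-- The solution set of the split equilibrium problem SEP(f,g,C,Q). -/
def SEPSol {E₁ E₂ : Type*} [NormedAddCommGroup E₁] [NormedSpace ℝ E₁]
    [NormedAddCommGroup E₂] [NormedSpace ℝ E₂]
    (C : Set E₁) (Q : Set E₂) (A : E₁ →L[ℝ] E₂)
    (f : E₁ → E₁ → ℝ) (g : E₂ → E₂ → ℝ) : Set (E₁ × E₂) :=
  {u | u.1 ∈ C ∧ u.2 ∈ Q ∧ u.2 = A u.1 ∧
    (∀ x ∈ C, 0 ≤ f u.1 x) ∧ (∀ y ∈ Q, 0 ≤ g u.2 y)}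

/-- The approximate solution set S(ε) of the perturbed split equilibrium problem,
where the perturbation parameter ranges over the closed ball M of radius `r`
centered at `pstar`, intersected with the closed ball of radius `ε` around `pstar`. -/
def approxSol {E₁ E₂ N : Type*} [NormedAddCommGroup E₁] [NormedSpace ℝ E₁]
    [NormedAddCommGroup E₂] [NormedSpace ℝ E₂] [NormedAddCommGroup N] [NormedSpace ℝ N]
    (C : Set E₁) (Q : Set E₂) (A : E₁ →L[ℝ] E₂) (pstar : N) (r : ℝ)
    (ft : N → E₁ → E₁ → ℝ) (gt : N → E₂ → E₂ → ℝ) (ε : ℝ) : Set (E₁ × E₂) :=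
  {u | ∃ p : N, ‖p - pstar‖ ≤ r ∧ ‖p - pstar‖ ≤ ε ∧
    infDist u.1 C ≤ ε ∧ infDist u.2 Q ≤ ε ∧ ‖u.2 - A u.1‖ ≤ ε ∧
    (∀ x ∈ C, -ε ≤ ft p u.1 x) ∧ (∀ y ∈ Q, -ε ≤ gt p u.2 y)}

/-- `u` is a generalized approximating sequence corresponding to the parameter
sequence `p` (which lies in the ball M of radius `r` around `pstar` and converges
to `pstar`) for the split equilibrium problem. -/
def GenApproxSeq {E₁ E₂ N : Type*} [NormedAddCommGroup E₁] [NormedSpace ℝ E₁]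
    [NormedAddCommGroup E₂] [NormedSpace ℝ E₂] [NormedAddCommGroup N] [NormedSpace ℝ N]
    (C : Set E₁) (Q : Set E₂) (A : E₁ →L[ℝ] E₂) (pstar : N) (r : ℝ)
    (ft : N → E₁ → E₁ → ℝ) (gt : N → E₂ → E₂ → ℝ)
    (p : ℕ → N) (u : ℕ → E₁ × E₂) : Prop :=
  (∀ n, ‖p n - pstar‖ ≤ r) ∧ Tendsto p atTop (nhds pstar) ∧
  ∃ ε : ℕ → ℝ, (∀ n, 0 < ε n) ∧ Tendsto ε atTop (nhds 0) ∧
    ∀ n, infDist (u n).1 C ≤ ε n ∧ infDist (u n).2 Q ≤ ε n ∧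
      ‖(u n).2 - A (u n).1‖ ≤ ε n ∧
      (∀ x ∈ C, -(ε n) ≤ ft (p n) (u n).1 x) ∧
      (∀ y ∈ Q, -(ε n) ≤ gt (p n) (u n).2 y)

/-- SEP(f,g,C,Q) is Levitin–Polyak well-posed by perturbations: the solution set is a
singleton and every generalized approximating sequence converges to the unique solution. -/
def LPWellPosedPerturb {E₁ E₂ N : Type*} [NormedAddCommGroup E₁] [NormedSpace ℝ E₁]
    [NormedAddCommGroup E₂] [NormedSpace ℝ E₂] [NormedAddCommGroup N] [NormedSpace ℝ N]
    (C : Set E₁) (Q : Set E₂) (A : E₁ →L[ℝ] E₂) (pstar : N) (r : ℝ)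
    (ft : N → E₁ → E₁ → ℝ) (gt : N → E₂ → E₂ → ℝ) : Prop :=
  ∃ ustar : E₁ × E₂, SEPSol C Q A (ft pstar) (gt pstar) = {ustar} ∧
    ∀ (p : ℕ → N) (u : ℕ → E₁ × E₂), GenApproxSeq C Q A pstar r ft gt p u →
      Tendsto u atTop (nhds ustar)

/-- SEP(f,g,C,Q) is Levitin–Polyak well-posed by perturbations in the generalized sense:
the solution set is nonempty and every generalized approximating sequence has a
subsequence converging to some solution. -/
def GenLPWellPosedPerturb {E₁ E₂ N : Type*} [NormedAddCommGroup E₁] [NormedSpace ℝ E₁]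
    [NormedAddCommGroup E₂] [NormedSpace ℝ E₂] [NormedAddCommGroup N] [NormedSpace ℝ N]
    (C : Set E₁) (Q : Set E₂) (A : E₁ →L[ℝ] E₂) (pstar : N) (r : ℝ)
    (ft : N → E₁ → E₁ → ℝ) (gt : N → E₂ → E₂ → ℝ) : Prop :=
  (SEPSol C Q A (ft pstar) (gt pstar)).Nonempty ∧
    ∀ (p : ℕ → N) (u : ℕ → E₁ × E₂), GenApproxSeq C Q A pstar r ft gt p u →
      ∃ ustar ∈ SEPSol C Q A (ft pstar) (gt pstar), ∃ φ : ℕ → ℕ, StrictMono φ ∧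
        Tendsto (u ∘ φ) atTop (nhds ustar)

/-- The Kuratowski measure of noncompactness: the infimum of all `ε > 0` such that the
set can be covered by finitely many sets, each of diameter `< ε`. -/
noncomputable def kuratowskiMNC {X : Type*} [PseudoEMetricSpace X] (s : Set X) : ENNReal :=
  sInf {ε : ENNReal | 0 < ε ∧ ∃ t : Finset (Set X), (s ⊆ ⋃ a ∈ t, (a : Set X)) ∧
    ∀ a ∈ t, EMetric.diam a < ε}

lemma sep_key_aux {E N : Type*} [NormedAddCommGroup E] [NormedSpace ℝ E]
    [FiniteDimensional ℝ E] [NormedAddCommGroup N] [NormedSpace ℝ N]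
    (C : Set E) (hCne : C.Nonempty) (hCcl : IsClosed C) (hCcv : Convex ℝ C)
    (pstar : N) (r : ℝ) (hr : 0 ≤ r) (F : N → E → E → ℝ)
    (hhemi : ∀ x y : E,
      limsup (fun t : ℝ => F pstar (x + t • (y - x)) y) (𝓝[>] (0 : ℝ)) ≤ F pstar x y)
    (hmono : ∀ p : N, ‖p - pstar‖ ≤ r → ∀ x y : E, F p x y + F p y x ≤ 0)
    (hconv : ∀ p : N, ‖p - pstar‖ ≤ r → ∀ x : E, ConvexOn ℝ Set.univ (F p x))
    (hdiag : ∀ w ∈ C, 0 ≤ F pstar w w)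
    (hcont : ∀ x : E, Continuous fun q : N × E => F q.1 x q.2)
    (a : E) (ha : a ∈ C) (haeq : ∀ x ∈ C, 0 ≤ F pstar a x)
    (q : ℕ → N) (hqr : ∀ k, ‖q k - pstar‖ ≤ r) (hq : Tendsto q atTop (𝓝 pstar))
    (w : ℕ → E) (δ : ℕ → ℝ) (hδ0 : ∀ k, 0 ≤ δ k) (hδ : Tendsto δ atTop (𝓝 0))
    (hwd : ∀ k, infDist (w k) C ≤ δ k)
    (hwi : ∀ k, ∀ x ∈ C, -(δ k) ≤ F (q k) (w k) x)
    (t : ℕ → ℝ) (ht0 : ∀ k, 0 < t k) (ht1 : ∀ k, t k ≤ 1) (ht : Tendsto t atTop (𝓝 0))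
    (z : E) (hz : Tendsto (fun k => a + t k • (w k - a)) atTop (𝓝 z)) :
    z ∈ C ∧ ∀ x ∈ C, 0 ≤ F pstar z x := by
  have hpr : ‖pstar - pstar‖ ≤ r := by simpa using hr
  -- choose nearest points
  have hcex : ∀ k, ∃ c ∈ C, infDist (w k) C = dist (w k) c := fun k =>
    hCcl.exists_infDist_eq_dist hCne (w k)
  choose c hcC hcd using hcex
  -- z ∈ C
  have hzC : z ∈ C := by
    have hbC : ∀ k, a + t k • (c k - a) ∈ C := by
      intro k
      have := hCcv ha (hcC k) (by linarith [ht0 k, ht1 k] : (0:ℝ) ≤ 1 - t k)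
        (ht0 k).le (by ring)
      convert this using 1
      module
    have hdist : Tendsto (fun k => dist (a + t k • (c k - a)) (a + t k • (w k - a)))
        atTop (𝓝 0) := by
      have hle : ∀ k, dist (a + t k • (c k - a)) (a + t k • (w k - a)) ≤ δ k := by
        intro k
        have : a + t k • (c k - a) - (a + t k • (w k - a)) = t k • (c k - w k) := by module
        rw [dist_eq_norm, this, norm_smul]
        have h1 : ‖c k - w k‖ = dist (w k) (c k) := by
          rw [dist_eq_norm, ← norm_neg]; congr 1; abel
        rw [h1, ← hcd k, Real.norm_eq_abs, abs_of_pos (ht0 k)]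
        calc t k * infDist (w k) C ≤ 1 * δ k := by
              apply mul_le_mul (ht1 k) (hwd k) (infDist_nonneg) zero_le_one
          _ = δ k := one_mul _
      exact squeeze_zero (fun k => dist_nonneg) hle hδ
    have : Tendsto (fun k => a + t k • (c k - a)) atTop (𝓝 z) :=
      hz.congr_dist (by simpa [dist_comm] using hdist)
    exact hCcl.mem_of_tendsto this (Eventually.of_forall hbC)
  refine ⟨hzC, ?_⟩
  -- step a : ∀ x ∈ C, F pstar x z ≤ 0
  have stepa : ∀ x ∈ C, F pstar x z ≤ 0 := by
    intro x hx
    have hineq : ∀ k, F (q k) x (a + t k • (w k - a)) ≤ (1 - t k) * F (q k) x a + δ k := by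
      intro k
      have hcv := (hconv (q k) (hqr k) x).2 (mem_univ a) (mem_univ (w k))
        (by linarith [ht1 k] : (0:ℝ) ≤ 1 - t k) (ht0 k).le (by ring)
      have heq : (1 - t k) • a + t k • w k = a + t k • (w k - a) := by module
      rw [heq, smul_eq_mul, smul_eq_mul] at hcv
      have hm : F (q k) x (w k) ≤ δ k := by
        have h1 := hmono (q k) (hqr k) (w k) x
        have h2 := hwi k x hx
        linarith
      have : t k * F (q k) x (w k) ≤ δ k := by
        calc t k * F (q k) x (w k) ≤ t k * δ k := by
              exact mul_le_mul_of_nonneg_left hm (ht0 k).le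
          _ ≤ 1 * δ k := mul_le_mul_of_nonneg_right (ht1 k) (hδ0 k)
          _ = δ k := one_mul _
      linarith
    have hL : Tendsto (fun k => F (q k) x (a + t k • (w k - a))) atTop (𝓝 (F pstar x z)) :=
      ((hcont x).tendsto (pstar, z)).comp (hq.prodMk_nhds hz)
    have hRa : Tendsto (fun k => F (q k) x a) atTop (𝓝 (F pstar x a)) :=
      ((hcont x).tendsto (pstar, a)).comp (hq.prodMk_nhds tendsto_const_nhds)
    have hR : Tendsto (fun k => (1 - t k) * F (q k) x a + δ k) atTop
        (𝓝 ((1 - 0) * F pstar x a + 0)) :=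
      ((tendsto_const_nhds.sub ht).mul hRa).add hδ
    have h1 : F pstar x z ≤ (1 - 0) * F pstar x a + 0 :=
      le_of_tendsto_of_tendsto' hL hR hineq
    have h2 := hmono pstar hpr a x
    have h3 := haeq x hx
    have h1' : F pstar x z ≤ F pstar x a := by linarith
    linarith
  -- Minty
  intro x hx
  set G : ℝ → ℝ := fun s => F pstar (z + s • (x - z)) x with hG
  have hev : ∀ᶠ s in 𝓝[>] (0:ℝ), 0 ≤ G s := by
    filter_upwards [Ioc_mem_nhdsGT_of_mem (by constructor <;> norm_num : (0:ℝ) ∈ Ico 0 1)]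
      with s hs
    have hwC : z + s • (x - z) ∈ C := by
      have := hCcv hzC hx (by linarith [hs.2] : (0:ℝ) ≤ 1 - s) hs.1.le (by ring)
      convert this using 1
      module
    have hd := hdiag _ hwC
    have hcv := (hconv pstar hpr (z + s • (x - z))).2 (mem_univ z) (mem_univ x)
      (by linarith [hs.2] : (0:ℝ) ≤ 1 - s) hs.1.le (by ring)
    have heq : (1 - s) • z + s • x = z + s • (x - z) := by module
    rw [heq, smul_eq_mul, smul_eq_mul] at hcv
    have hle := stepa _ hwC
    have hnn : (1 - s) * F pstar (z + s • (x - z)) z ≤ 0 :=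
      mul_nonpos_of_nonneg_of_nonpos (by linarith [hs.2]) hle
    have h0 : 0 ≤ s * F pstar (z + s • (x - z)) x := by linarith
    have hpos : 0 ≤ F pstar (z + s • (x - z)) x := by nlinarith [hs.1, h0]
    simpa [hG] using hpos
  by_cases hb : IsBoundedUnder (· ≤ ·) (𝓝[>] (0:ℝ)) G
  · exact le_trans (le_limsup_of_frequently_le hev.frequently hb) (hhemi z x)
  · have hempty : {a : ℝ | ∀ᶠ s in 𝓝[>] (0:ℝ), G s ≤ a} = ∅ := by
      ext a; simp only [mem_setOf_eq, mem_empty_iff_false, iff_false]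
      intro h; exact hb ⟨a, h⟩
    have hlim : limsup G (𝓝[>] (0:ℝ)) = 0 := by
      rw [limsup_eq, hempty, Real.sInf_empty]
    have h2 : limsup G (𝓝[>] (0:ℝ)) ≤ F pstar z x := hhemi z x
    linarith

/-- In finite dimensions, under hemicontinuity, monotonicity, convexity, diagonal
nonnegativity and continuity assumptions, if SEP(f,g,C,Q) has a unique solution then
every generalized approximating sequence is bounded. -/
theorem sep_genApproxSeq_bounded_of_existsUnique
    {E₁ E₂ N : Type*} [NormedAddCommGroup E₁] [NormedSpace ℝ E₁] [CompleteSpace E₁]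
    [NormedAddCommGroup E₂] [NormedSpace ℝ E₂] [CompleteSpace E₂]
    [NormedAddCommGroup N] [NormedSpace ℝ N]
    (C : Set E₁) (Q : Set E₂) (hCne : C.Nonempty) (hCcl : IsClosed C) (hCcv : Convex ℝ C)
    (hQne : Q.Nonempty) (hQcl : IsClosed Q) (hQcv : Convex ℝ Q)
    (A : E₁ →L[ℝ] E₂) (pstar : N) (r : ℝ) (hr : 0 < r)
    (ftil : N → E₁ → E₁ → ℝ) (gtil : N → E₂ → E₂ → ℝ)
    [FiniteDimensional ℝ E₁] [FiniteDimensional ℝ E₂]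
    (hfhemi : ∀ x y : E₁,
      limsup (fun t : ℝ => ftil pstar (x + t • (y - x)) y) (𝓝[>] (0 : ℝ)) ≤ ftil pstar x y)
    (hghemi : ∀ x y : E₂,
      limsup (fun t : ℝ => gtil pstar (x + t • (y - x)) y) (𝓝[>] (0 : ℝ)) ≤ gtil pstar x y)
    (hfmono : ∀ p : N, ‖p - pstar‖ ≤ r → ∀ x y : E₁, ftil p x y + ftil p y x ≤ 0)
    (hgmono : ∀ p : N, ‖p - pstar‖ ≤ r → ∀ x y : E₂, gtil p x y + gtil p y x ≤ 0)
    (hfconv : ∀ p : N, ‖p - pstar‖ ≤ r → ∀ x : E₁, ConvexOn ℝ Set.univ (ftil p x))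
    (hgconv : ∀ p : N, ‖p - pstar‖ ≤ r → ∀ y : E₂, ConvexOn ℝ Set.univ (gtil p y))
    (hfdiag : ∀ x ∈ C, 0 ≤ ftil pstar x x)
    (hgdiag : ∀ y ∈ Q, 0 ≤ gtil pstar y y)
    (hfcont : ∀ x : E₁, Continuous fun q : N × E₁ => ftil q.1 x q.2)
    (hgcont : ∀ y : E₂, Continuous fun q : N × E₂ => gtil q.1 y q.2)
    (huniq : ∃! u : E₁ × E₂, u ∈ SEPSol C Q A (ftil pstar) (gtil pstar)) :
    ∀ (p : ℕ → N) (u : ℕ → E₁ × E₂), GenApproxSeq C Q A pstar r ftil gtil p u →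
      Bornology.IsBounded (Set.range u) := by
  intro p u hgen
  obtain ⟨hpball, hptend, ε, hεpos, hεt, hεc⟩ := hgen
  obtain ⟨ustar, hustar, huni⟩ := huniq
  simp only [SEPSol, Set.mem_setOf_eq] at hustar
  obtain ⟨hu1, hu2, hu3, hu4, hu5⟩ := hustar
  by_contra hub
  have hlarge : ∀ R : ℝ, ∃ k, R < ‖u k‖ := by
    intro R
    by_contra h; push_neg at h
    exact hub (isBounded_iff_forall_norm_le.2 ⟨R, by rintro x ⟨k, rfl⟩; exact h k⟩)
  have hfreq : ∀ n : ℕ, ∃ᶠ k in atTop, (n : ℝ) + 1 < ‖u k - ustar‖ := by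
    intro n
    rw [frequently_atTop]
    intro N0
    set S := (Finset.range (N0 + 1)).image fun k => ‖u k‖ with hS
    have hSne : S.Nonempty := by
      refine Finset.image_nonempty.2 ⟨0, ?_⟩
      simp
    set R := max ((n : ℝ) + 1 + ‖ustar‖) (S.max' hSne) with hR
    obtain ⟨k, hk⟩ := hlarge R
    refine ⟨k, ?_, ?_⟩
    · by_contra hkN
      push_neg at hkN
      have hmem : ‖u k‖ ∈ S := Finset.mem_image.2 ⟨k, Finset.mem_range.2 (by omega), rfl⟩
      have := Finset.le_max' S _ hmem
      have := le_max_right ((n : ℝ) + 1 + ‖ustar‖) (S.max' hSne)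
      linarith
    · have h1 := norm_sub_norm_le (u k) ustar
      have h2 := le_max_left ((n : ℝ) + 1 + ‖ustar‖) (S.max' hSne)
      linarith
  obtain ⟨φ, hφ, hφbig⟩ := extraction_forall_of_frequently hfreq
  have hnormpos : ∀ n, (0 : ℝ) < ‖u (φ n) - ustar‖ := fun n =>
    lt_trans (by positivity) (hφbig n)
  have hnorm1 : ∀ n, (1 : ℝ) ≤ ‖u (φ n) - ustar‖ := fun n => by
    have := hφbig n
    have : (0:ℝ) ≤ (n:ℝ) := Nat.cast_nonneg n
    linarith [hφbig n]
  set t : ℕ → ℝ := fun n => ‖u (φ n) - ustar‖⁻¹ with htdef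
  have htpos : ∀ n, 0 < t n := fun n => inv_pos.2 (hnormpos n)
  have ht1 : ∀ n, t n ≤ 1 := fun n => inv_le_one_of_one_le₀ (hnorm1 n)
  have htto : Tendsto t atTop (𝓝 0) := by
    have hub2 : ∀ n : ℕ, t n ≤ ((n : ℝ) + 1)⁻¹ := fun n =>
      inv_anti₀ (by positivity) (hφbig n).le
    have hg : Tendsto (fun n : ℕ => ((n : ℝ) + 1)⁻¹) atTop (𝓝 0) := by
      simpa only [one_div] using tendsto_one_div_add_atTop_nhds_zero_nat (𝕜 := ℝ)
    exact squeeze_zero (fun n => (htpos n).le) hub2 hg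
  set ζ : ℕ → E₁ × E₂ := fun n => ustar + t n • (u (φ n) - ustar) with hζdef
  have hζnorm : ∀ n, ‖ζ n - ustar‖ = 1 := by
    intro n
    have : ζ n - ustar = t n • (u (φ n) - ustar) := by simp only [hζdef]; module
    rw [this, norm_smul, Real.norm_eq_abs, abs_of_pos (htpos n), htdef]
    exact inv_mul_cancel₀ (hnormpos n).ne'
  have hζball : ∀ n, ζ n ∈ closedBall ustar 1 := fun n => by
    simp [mem_closedBall, dist_eq_norm, hζnorm n]
  obtain ⟨z, hzball, ψ, hψ, hζto⟩ := (isCompact_closedBall ustar 1).tendsto_subseq hζball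
  have hznorm : ‖z - ustar‖ = 1 := by
    have h1 : Tendsto (fun k => ‖(ζ ∘ ψ) k - ustar‖) atTop (𝓝 ‖z - ustar‖) :=
      (hζto.sub tendsto_const_nhds).norm
    have h2 : (fun k => ‖(ζ ∘ ψ) k - ustar‖) = fun _ => (1 : ℝ) :=
      funext fun k => hζnorm (ψ k)
    rw [h2] at h1
    exact tendsto_nhds_unique h1 tendsto_const_nhds
  set m : ℕ → ℕ := φ ∘ ψ with hmdef
  have hmtend : Tendsto m atTop atTop := (hφ.comp hψ).tendsto_atTop
  have hq : Tendsto (p ∘ m) atTop (𝓝 pstar) := hptend.comp hmtend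
  have hδ : Tendsto (ε ∘ m) atTop (𝓝 0) := hεt.comp hmtend
  have ht' : Tendsto (t ∘ ψ) atTop (𝓝 0) := htto.comp hψ.tendsto_atTop
  have hz1 : Tendsto (fun k => ustar.1 + (t ∘ ψ) k • ((u (m k)).1 - ustar.1)) atTop (𝓝 z.1) := by
    have := (continuous_fst.tendsto z).comp hζto
    exact this
  have hz2 : Tendsto (fun k => ustar.2 + (t ∘ ψ) k • ((u (m k)).2 - ustar.2)) atTop (𝓝 z.2) := by
    have := (continuous_snd.tendsto z).comp hζto
    exact this
  obtain ⟨hz1C, hz1sol⟩ := sep_key_aux C hCne hCcl hCcv pstar r hr.le ftil hfhemi hfmono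
    hfconv hfdiag hfcont ustar.1 hu1 hu4 (p ∘ m) (fun k => hpball (m k)) hq
    (fun k => (u (m k)).1) (ε ∘ m) (fun k => (hεpos (m k)).le) hδ
    (fun k => (hεc (m k)).1) (fun k x hx => (hεc (m k)).2.2.2.1 x hx)
    (t ∘ ψ) (fun k => htpos (ψ k)) (fun k => ht1 (ψ k)) ht' z.1 hz1
  obtain ⟨hz2Q, hz2sol⟩ := sep_key_aux Q hQne hQcl hQcv pstar r hr.le gtil hghemi hgmono
    hgconv hgdiag hgcont ustar.2 hu2 hu5 (p ∘ m) (fun k => hpball (m k)) hq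
    (fun k => (u (m k)).2) (ε ∘ m) (fun k => (hεpos (m k)).le) hδ
    (fun k => (hεc (m k)).2.1) (fun k y hy => (hεc (m k)).2.2.2.2 y hy)
    (t ∘ ψ) (fun k => htpos (ψ k)) (fun k => ht1 (ψ k)) ht' z.2 hz2
  have hAeq : ∀ k, (ζ (ψ k)).2 - A (ζ (ψ k)).1
      = (t ∘ ψ) k • ((u (m k)).2 - A ((u (m k)).1)) := by
    intro k
    show ustar.2 + (t ∘ ψ) k • ((u (m k)).2 - ustar.2)
      - A (ustar.1 + (t ∘ ψ) k • ((u (m k)).1 - ustar.1)) = _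
    rw [map_add, map_smul, map_sub, hu3]
    module
  have hAbound : ∀ k, ‖(ζ (ψ k)).2 - A (ζ (ψ k)).1‖ ≤ (ε ∘ m) k := by
    intro k
    rw [hAeq k, norm_smul, Real.norm_eq_abs]
    simp only [Function.comp_apply]
    rw [abs_of_pos (htpos (ψ k))]
    calc t (ψ k) * ‖(u (m k)).2 - A ((u (m k)).1)‖
        ≤ 1 * ε (m k) := by
          exact mul_le_mul (ht1 (ψ k)) (hεc (m k)).2.2.1 (norm_nonneg _) zero_le_one
      _ = ε (m k) := one_mul _
  have hAz : Tendsto (fun k => (ζ (ψ k)).2 - A ((ζ (ψ k)).1)) atTop (𝓝 (z.2 - A z.1)) := by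
    exact ((continuous_snd.tendsto z).comp hζto).sub
      ((A.continuous.tendsto z.1).comp ((continuous_fst.tendsto z).comp hζto))
  have hz2eq : z.2 = A z.1 := by
    have h0 : ‖z.2 - A z.1‖ ≤ 0 := le_of_tendsto_of_tendsto' hAz.norm hδ hAbound
    have h1 : z.2 - A z.1 = 0 := norm_le_zero_iff.mp h0
    exact sub_eq_zero.mp h1
  have hzeq : z = ustar := huni z ⟨hz1C, hz2Q, hz2eq, hz1sol, hz2sol⟩
  rw [hzeq] at hznorm
  simp at hznorm
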